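/- In particular, for u > 0 and g_u(x) = exp(−u x), every Walsh coefficient ĝ_u(k) = ∫_0^1 exp(−u x)·wal_k(x) dx is strictly positive. -/

import Mathlib

open MeasureTheory

/-- The `i`-th binary digit (for `i ≥ 1`) of `x ∈ [0,1)` in the expansion
`x = Σ_{i ≥ 1} x_i 2^{-i}` with infinitely many digits equal to `0`. -/
noncomputable def binDigit (x : ℝ) (i : ℕ) : ℕ := (⌊x * 2 ^ i⌋).toNat % 2

/-- The `k`-th dyadic Walsh function on `[0,1)`:
`wal_k(x) = (-1)^{Σ_{i ≥ 1} κ_i x_i}` where `k = Σ κ_i 2^{i-1}`. -/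
noncomputable def walsh (k : ℕ) (x : ℝ) : ℝ :=
  ∏ i ∈ Finset.range k.size, if k.testBit i then (-1 : ℝ) ^ binDigit x (i + 1) else 1

/-- The `k`-th dyadic Walsh coefficient of `f : [0,1) → ℝ`. -/
noncomputable def walshCoeff (f : ℝ → ℝ) (k : ℕ) : ℝ :=
  ∫ x in (0:ℝ)..1, f x * walsh k x

/-- `μ_u(k) = Σ_{i ≥ 1} (i + 1 - log₂ u) κ_i`, for the binary digits `κ_i` of `k`. -/
noncomputable def muWeight (u : ℝ) (k : ℕ) : ℝ :=
  ∑ i ∈ Finset.range k.size, if k.testBit i then ((i : ℝ) + 2 - Real.logb 2 u) else 0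

/-- `A_u = (1 - exp (-u)) / u`. -/
noncomputable def Aconst (u : ℝ) : ℝ := (1 - Real.exp (-u)) / u

/-- `B_u = inf_{w ≥ 1} ((1-exp(-2^{-w}u))/(2^{-w}u)) ∏_{i=1}^w (1-exp(-2^{-i}u))/(2^{-i}u)`. -/
noncomputable def Bconst (u : ℝ) : ℝ :=
  ⨅ w : {w : ℕ // 1 ≤ w},
    ((1 - Real.exp (-((2:ℝ) ^ (-((w:ℕ):ℤ)) * u))) / ((2:ℝ) ^ (-((w:ℕ):ℤ)) * u))
      * ∏ i ∈ Finset.Icc 1 (w : ℕ),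
          (1 - Real.exp (-((2:ℝ) ^ (-(i:ℤ)) * u))) / ((2:ℝ) ^ (-(i:ℤ)) * u)



lemma measurable_walsh (k : ℕ) : Measurable (walsh k) := by
  unfold walsh
  apply Finset.measurable_prod
  intro i _
  by_cases h : k.testBit i
  · simp only [h, if_true]
    have : Measurable fun x : ℝ => ⌊x * 2 ^ (i+1)⌋ :=
      Int.measurable_floor.comp (measurable_id.mul_const _)
    exact (measurable_from_top (f := fun n : ℤ => ((-1:ℝ)) ^ (n.toNat % 2))).comp this
  · simp only [h, if_false]; exact measurable_const

lemma abs_walsh_le (k : ℕ) (x : ℝ) : |walsh k x| ≤ 1 := by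
  unfold walsh
  rw [Finset.abs_prod]
  apply Finset.prod_le_one (fun i _ => abs_nonneg _)
  intro i _
  by_cases h : k.testBit i <;> simp [h, abs_pow]

lemma size_succ_of_ne_zero {k : ℕ} (hk : k ≠ 0) : k.size = (k / 2).size + 1 := by
  conv_lhs => rw [← Nat.bit_testBit_zero_shiftRight_one k]
  rw [Nat.size_bit (by rwa [Nat.bit_testBit_zero_shiftRight_one])]
  rw [Nat.shiftRight_one]

lemma binDigit_two_mul (x : ℝ) (i : ℕ) : binDigit (2 * x) i = binDigit x (i + 1) := by
  unfold binDigit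
  congr 2
  ring_nf

lemma binDigit_two_mul_sub_one {x : ℝ} (hx : 1 / 2 ≤ x) (i : ℕ) :
    binDigit (2 * x - 1) (i + 1) = binDigit x (i + 2) := by
  unfold binDigit
  have h1 : (2 * x - 1) * 2 ^ (i + 1) = x * 2 ^ (i + 2) - (2 ^ (i+1) : ℤ) := by
    push_cast; ring
  rw [h1, Int.floor_sub_intCast]
  have hn : (2 ^ (i+1) : ℤ) ≤ ⌊x * 2 ^ (i + 2)⌋ := by
    apply Int.le_floor.2
    push_cast
    calc (2:ℝ) ^ (i+1) = (1/2) * 2 ^ (i+2) := by ring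
    _ ≤ x * 2 ^ (i+2) := by
        apply mul_le_mul_of_nonneg_right hx (by positivity)
  set n := ⌊x * 2 ^ (i + 2)⌋ with hndef
  have hpos : (0:ℤ) < 2 ^ (i+1) := by positivity
  obtain ⟨c, hc⟩ : (2:ℤ) ∣ 2 ^ (i+1) := dvd_pow_self 2 (Nat.succ_ne_zero i)
  rw [hc] at hn hpos ⊢
  omega

lemma binDigit_one_eq_zero {x : ℝ} (h0 : 0 ≤ x) (h1 : x < 1/2) : binDigit x 1 = 0 := by
  unfold binDigit
  have h : ⌊x * 2⌋ = 0 := by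
    rw [Int.floor_eq_zero_iff, Set.mem_Ico]
    constructor <;> nlinarith
  norm_num [h]

lemma binDigit_one_eq_one {x : ℝ} (h0 : 1/2 ≤ x) (h1 : x < 1) : binDigit x 1 = 1 := by
  unfold binDigit
  have h : ⌊x * 2⌋ = 1 := by
    rw [Int.floor_eq_iff]
    constructor <;> push_cast <;> nlinarith
  norm_num [h]

lemma walsh_zero (x : ℝ) : walsh 0 x = 1 := by simp [walsh, Nat.size_zero]

lemma walsh_left {k : ℕ} {x : ℝ} (h0 : 0 ≤ x) (h1 : x < 1/2) :
    walsh k x = walsh (k / 2) (2 * x) := by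
  rcases eq_or_ne k 0 with rfl | hk
  · simp [walsh_zero]
  unfold walsh
  rw [size_succ_of_ne_zero hk, Finset.prod_range_succ']
  have hF0 : (if k.testBit 0 then (-1 : ℝ) ^ binDigit x (0 + 1) else 1) = 1 := by
    rw [binDigit_one_eq_zero h0 h1]; simp
  rw [hF0, mul_one]
  apply Finset.prod_congr rfl
  intro i _
  rw [Nat.testBit_succ, binDigit_two_mul]

lemma walsh_right {k : ℕ} {x : ℝ} (hk : k ≠ 0) (h0 : 1/2 ≤ x) (h1 : x < 1) :
    walsh k x = (if k.testBit 0 then (-1:ℝ) else 1) * walsh (k / 2) (2 * x - 1) := by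
  unfold walsh
  rw [size_succ_of_ne_zero hk, Finset.prod_range_succ']
  have hF0 : (if k.testBit 0 then (-1 : ℝ) ^ binDigit x (0 + 1) else 1)
      = (if k.testBit 0 then (-1:ℝ) else 1) := by
    rw [binDigit_one_eq_one h0 h1]; simp
  rw [hF0, mul_comm]
  congr 1
  apply Finset.prod_congr rfl
  intro i _
  rw [Nat.testBit_succ, binDigit_two_mul_sub_one h0]

open intervalIntegral in
lemma walsh_intInt (u : ℝ) (k : ℕ) (a b : ℝ) :
    IntervalIntegrable (fun x => Real.exp (-u * x) * walsh k x) volume a b := by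
  apply IntervalIntegrable.mono_fun
    (_root_.intervalIntegrable_const (c := Real.exp (|u| * (|a| + |b|))))
  · exact ((Real.measurable_exp.comp ((measurable_const.mul measurable_id))).mul
      (measurable_walsh k)).aestronglyMeasurable
  · rw [Filter.EventuallyLE, ae_restrict_iff' measurableSet_uIoc]
    apply Filter.Eventually.of_forall
    intro x hx
    have hx' : |x| ≤ |a| + |b| := by
      rcases le_total a b with h | h
      · rw [Set.uIoc_of_le h] at hx
        rw [abs_le]; constructor
        · nlinarith [hx.1, abs_nonneg b, neg_abs_le a, hx.2]
        · nlinarith [hx.2, abs_nonneg a, le_abs_self b]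
      · rw [Set.uIoc_of_ge h] at hx
        rw [abs_le]; constructor
        · nlinarith [hx.1, abs_nonneg a, neg_abs_le b]
        · nlinarith [hx.2, abs_nonneg b, le_abs_self a]
    have h1 : -u * x ≤ |u| * (|a| + |b|) := by
      calc -u * x ≤ |(-u) * x| := le_abs_self _
      _ = |u| * |x| := by rw [abs_mul, abs_neg]
      _ ≤ |u| * (|a| + |b|) := by
          exact mul_le_mul_of_nonneg_left hx' (abs_nonneg u)
    simp only [norm_mul, Real.norm_eq_abs, Real.abs_exp]
    calc Real.exp (-u * x) * |walsh k x| ≤ Real.exp (-u * x) * 1 :=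
        mul_le_mul_of_nonneg_left (abs_walsh_le k x) (Real.exp_pos _).le
    _ = Real.exp (-u * x) := mul_one _
    _ ≤ Real.exp (|u| * (|a| + |b|)) := Real.exp_le_exp.2 h1

open intervalIntegral in
lemma walsh_rec (u : ℝ) {k : ℕ} (hk : k ≠ 0) :
    (∫ x in (0:ℝ)..1, Real.exp (-u * x) * walsh k x)
      = (1/2) * (1 + (if k.testBit 0 then (-1:ℝ) else 1) * Real.exp (-(u/2)))
        * ∫ x in (0:ℝ)..1, Real.exp (-(u/2) * x) * walsh (k/2) x := by
  have hae : ∀ c : ℝ, ∀ᵐ x : ℝ, x ≠ c := by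
    intro c
    rw [MeasureTheory.ae_iff]
    simpa using Real.volume_singleton (a := c)
  have hsplit := integral_add_adjacent_intervals
    (walsh_intInt u k 0 (1/2)) (walsh_intInt u k (1/2) 1)
  rw [← hsplit]
  set s : ℝ := if k.testBit 0 then (-1:ℝ) else 1 with hs
  have hL : (∫ x in (0:ℝ)..(1/2), Real.exp (-u * x) * walsh k x)
      = ∫ x in (0:ℝ)..(1/2),
          (fun t => Real.exp (-(u/2) * t) * walsh (k/2) t) (2 * x) := by
    apply intervalIntegral.integral_congr_ae
    filter_upwards [hae (1/2)] with x hx hmem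
    rw [Set.uIoc_of_le (by norm_num : (0:ℝ) ≤ 1/2)] at hmem
    have hx2 : x < 1/2 := lt_of_le_of_ne hmem.2 hx
    rw [walsh_left hmem.1.le hx2]
    show _ = Real.exp (-(u/2) * (2*x)) * walsh (k/2) (2*x)
    congr 2
    ring
  have hR : (∫ x in (1/2:ℝ)..1, Real.exp (-u * x) * walsh k x)
      = ∫ x in (1/2:ℝ)..1, (s * Real.exp (-(u/2))) *
          (fun t => Real.exp (-(u/2) * t) * walsh (k/2) t) (2 * x - 1) := by
    apply intervalIntegral.integral_congr_ae
    filter_upwards [hae 1] with x hx hmem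
    rw [Set.uIoc_of_le (by norm_num : (1/2:ℝ) ≤ 1)] at hmem
    have hx2 : x < 1 := lt_of_le_of_ne hmem.2 hx
    rw [walsh_right hk hmem.1.le hx2]
    show _ = s * Real.exp (-(u/2)) * (Real.exp (-(u/2) * (2*x-1)) * walsh (k/2) (2*x-1))
    rw [show Real.exp (-u * x) = Real.exp (-(u/2)) * Real.exp (-(u/2) * (2*x-1)) by
      rw [← Real.exp_add]; ring_nf]
    ring
  rw [hL, hR]
  rw [integral_comp_mul_left
    (fun t => Real.exp (-(u/2) * t) * walsh (k/2) t) (two_ne_zero)]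
  rw [intervalIntegral.integral_const_mul]
  rw [integral_comp_mul_sub
    (fun t => Real.exp (-(u/2) * t) * walsh (k/2) t) (two_ne_zero) 1]
  norm_num
  ring

lemma walsh_base (u : ℝ) (hu : 0 < u) :
    0 < ∫ x in (0:ℝ)..1, Real.exp (-u * x) * walsh 0 x := by
  have h : (fun x : ℝ => Real.exp (-u * x) * walsh 0 x)
      = fun x : ℝ => Real.exp (-u * x) := by
    funext x; rw [walsh_zero, mul_one]
  rw [h]
  apply intervalIntegral.intervalIntegral_pos_of_pos
  · exact (Real.continuous_exp.comp (continuous_const.mul continuous_id)).intervalIntegrable 0 1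
  · intro x; exact Real.exp_pos _
  · norm_num

lemma walsh_integral_pos : ∀ k : ℕ, ∀ u : ℝ, 0 < u →
    0 < ∫ x in (0:ℝ)..1, Real.exp (-u * x) * walsh k x := by
  intro k
  induction k using Nat.strong_induction_on with
  | _ k ih =>
    intro u hu
    rcases eq_or_ne k 0 with rfl | hk
    · exact walsh_base u hu
    · rw [walsh_rec u hk]
      have hexp : Real.exp (-(u/2)) < 1 := Real.exp_lt_one_iff.2 (by linarith)
      have hexp0 : 0 < Real.exp (-(u/2)) := Real.exp_pos _
      apply mul_pos
      · apply mul_pos (by norm_num)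
        by_cases h : k.testBit 0 <;> simp [h] <;> linarith
      · exact ih (k/2) (Nat.div_lt_self (Nat.pos_of_ne_zero hk) one_lt_two) (u/2)
          (half_pos hu)

/-- For `u > 0` and `g_u(x) = exp (-u x)`, every Walsh coefficient
`ĝ_u(k) = ∫_0^1 exp (-u x) wal_k(x) dx` is strictly positive. -/
theorem walshCoeff_exp_pos (u : ℝ) (hu : 0 < u) (k : ℕ) :
    0 < walshCoeff (fun x => Real.exp (-u * x)) k :=
  walsh_integral_pos k u hu
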